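/- Define σ(n) = 2^{(n+1)/2} · ∏_{j=1}^{n} (2π)^{(j+1)/2} / Γ((j+1)/2) for positive integers n, and W(q) = (σ(q+3)/(σ(3)·σ(q))) · ∏_{j=1}^{⌈(q+1)/2⌉} |B_{2j}|/(4j), where B_{2j} are the Bernoulli numbers. Then lim_{q→∞} (log W(q)) / (q² · log q) = 1/4. -/

import Mathlib

open Filter Real

/-- The Haar volume of the orthogonal group `O(n)`:
`σ(n) = 2^{(n+1)/2} ∏_{j=1}^{n} (2π)^{(j+1)/2} / Γ((j+1)/2)`. -/
noncomputable def orthVol (n : ℕ) : ℝ :=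
  2 ^ (((n : ℝ) + 1) / 2) *
    ∏ j ∈ Finset.Icc 1 n, (2 * π) ^ (((j : ℝ) + 1) / 2) / Real.Gamma (((j : ℝ) + 1) / 2)

/-- The total volume of the arithmetic quotient `O(L,ℤ)\O(3,q)/(O(3)×O(q))`:
the geometric factor `σ(q+3)/(σ(3)σ(q))` times the Siegel mass factor
`∏_{j=1}^{⌈(q+1)/2⌉} |B_{2j}|/(4j)`. -/
noncomputable def arithVol (q : ℕ) : ℝ :=
  (orthVol (q + 3) / (orthVol 3 * orthVol q)) *
    ∏ j ∈ Finset.Icc 1 (Nat.ceil (((q : ℚ) + 1) / 2)),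
      |((bernoulli (2 * j) : ℚ) : ℝ)| / (4 * (j : ℝ))

set_option maxHeartbeats 1000000
open Finset Topology

lemma log_factorial_le (n : ℕ) : Real.log (n.factorial : ℝ) ≤ n * Real.log n := by
  calc Real.log (n.factorial : ℝ) ≤ Real.log ((n:ℝ) ^ n) := by
        apply Real.log_le_log (by positivity)
        exact_mod_cast Nat.factorial_le_pow n
    _ = n * Real.log n := Real.log_pow n n

lemma le_log_factorial (n : ℕ) : n * Real.log n - n ≤ Real.log (n.factorial : ℝ) := by
  rcases Nat.eq_zero_or_pos n with rfl | hn
  · simp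
  have h := Real.pow_div_factorial_le_exp (n:ℝ) (Nat.cast_nonneg n) n
  have hf : (0:ℝ) < (n.factorial : ℝ) := by exact_mod_cast Nat.factorial_pos n
  have h2 : (n:ℝ) ^ n ≤ (n.factorial : ℝ) * Real.exp n := by
    rw [div_le_iff₀ hf] at h; linarith [h]
  have hp : (0:ℝ) < (n:ℝ) ^ n := by positivity
  have := Real.log_le_log hp h2
  rw [Real.log_pow, Real.log_mul (ne_of_gt hf) (Real.exp_ne_zero _), Real.log_exp] at this
  linarith

lemma log_two_le : Real.log 2 ≤ 1 := by
  rw [Real.log_le_iff_le_exp (by norm_num)]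
  linarith [Real.add_one_le_exp (1:ℝ)]

lemma log_pi_le : Real.log π ≤ 3/2 := by
  have h4 : π ≤ 4 := Real.pi_le_four
  calc Real.log π ≤ Real.log 4 := Real.log_le_log Real.pi_pos h4
    _ ≤ 3/2 := by
        rw [Real.log_le_iff_le_exp (by norm_num)]
        have h1 : Real.exp (3/2 : ℝ) = Real.exp 1 * Real.exp (1/2) := by
          rw [← Real.exp_add]; norm_num
        have h2 : (3/2 : ℝ) ≤ Real.exp (1/2) := by
          have := Real.add_one_le_exp (1/2 : ℝ); linarith
        have h3 : (2.7182818283 : ℝ) < Real.exp 1 := Real.exp_one_gt_d9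
        nlinarith [Real.exp_pos (1/2 : ℝ)]


lemma bern_abs_eq (j : ℕ) (hj : 1 ≤ j) :
    ∃ S : ℝ, 1 ≤ S ∧ S ≤ 3 ∧
      |((bernoulli (2 * j) : ℚ) : ℝ)| =
        S * ((2 * j).factorial : ℝ) / (2 ^ (2 * j - 1) * π ^ (2 * j)) := by
  have hS := hasSum_zeta_nat (k := j) (by omega)
  set S : ℝ := (-1 : ℝ) ^ (j + 1) * (2 : ℝ) ^ (2 * j - 1) * π ^ (2 * j) *
      ((bernoulli (2 * j) : ℚ) : ℝ) / ((2 * j).factorial : ℝ) with hSdef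
  have hS1 : 1 ≤ S := by
    have := le_hasSum hS 1 (fun i _ => by positivity)
    simpa using this
  have hS3 : S ≤ 3 := by
    have hle : S ≤ π ^ 2 / 6 := by
      refine hasSum_le (fun n => ?_) hS hasSum_zeta_two
      rcases Nat.eq_zero_or_pos n with rfl | hn
      · rw [Nat.cast_zero, zero_pow (by omega : 2 * j ≠ 0)]; norm_num
      · have h1 : (1:ℝ) ≤ (n:ℝ) := by exact_mod_cast hn
        have : (n:ℝ) ^ 2 ≤ (n:ℝ) ^ (2 * j) := pow_le_pow_right₀ h1 (by omega)
        exact one_div_le_one_div_of_le (by positivity) this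
    nlinarith [Real.pi_le_four, Real.pi_pos]
  refine ⟨S, hS1, hS3, ?_⟩
  have hd : (0:ℝ) < 2 ^ (2 * j - 1) * π ^ (2 * j) := by positivity
  have hf : (0:ℝ) < ((2 * j).factorial : ℝ) := by exact_mod_cast Nat.factorial_pos _
  have habs : |S| = 2 ^ (2 * j - 1) * π ^ (2 * j) * |((bernoulli (2 * j) : ℚ) : ℝ)| /
      ((2 * j).factorial : ℝ) := by
    rw [hSdef, abs_div, abs_mul, abs_mul, abs_mul, abs_pow, abs_neg, abs_one, one_pow,
      one_mul, abs_pow, abs_pow, abs_two, abs_of_pos Real.pi_pos, abs_of_pos hf]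
  rw [abs_of_pos (by linarith : (0:ℝ) < S)] at habs
  field_simp at habs ⊢
  linarith [habs]


lemma bern_pos (j : ℕ) (hj : 1 ≤ j) : 0 < |((bernoulli (2 * j) : ℚ) : ℝ)| := by
  obtain ⟨S, hS1, _, hEq⟩ := bern_abs_eq j hj
  rw [hEq]
  have : (0:ℝ) < ((2*j).factorial : ℝ) := by exact_mod_cast Nat.factorial_pos _
  positivity

lemma t_upper (j : ℕ) (hj : 1 ≤ j) :
    Real.log (|((bernoulli (2 * j) : ℚ) : ℝ)| / (4 * j)) ≤ 2 * j * Real.log (2 * j) := by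
  obtain ⟨S, hS1, hS3, hEq⟩ := bern_abs_eq j hj
  have hf : (0:ℝ) < ((2*j).factorial : ℝ) := by exact_mod_cast Nat.factorial_pos _
  have hj' : (1:ℝ) ≤ (j:ℝ) := by exact_mod_cast hj
  have hd : (1:ℝ) ≤ 2 ^ (2 * j - 1) * π ^ (2 * j) := by
    have h1 : (1:ℝ) ≤ 2 ^ (2 * j - 1) := one_le_pow₀ (by norm_num)
    have h2 : (1:ℝ) ≤ π ^ (2 * j) := one_le_pow₀ (by linarith [Real.pi_gt_three])
    nlinarith
  have key : |((bernoulli (2 * j) : ℚ) : ℝ)| / (4 * j) ≤ ((2*j).factorial : ℝ) := by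
    rw [hEq]
    rw [div_div, div_le_iff₀ (by nlinarith)]
    have e1 : S * ((2*j).factorial : ℝ) ≤ 3 * ((2*j).factorial : ℝ) :=
      mul_le_mul_of_nonneg_right hS3 hf.le
    have e2 : (3:ℝ) ≤ 4 * j := by linarith
    have e3 : (3:ℝ) ≤ (2 ^ (2 * j - 1) * π ^ (2 * j)) * (4 * j) := by nlinarith
    have e4 := mul_le_mul_of_nonneg_left e3 hf.le
    linarith
  calc Real.log (|((bernoulli (2 * j) : ℚ) : ℝ)| / (4 * j)) ≤ Real.log ((2*j).factorial : ℝ) := by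
        apply Real.log_le_log _ key
        have := bern_pos j hj
        positivity
    _ ≤ (2*j : ℕ) * Real.log ((2*j : ℕ) : ℝ) := log_factorial_le (2*j)
    _ = 2 * j * Real.log (2 * j) := by push_cast; ring

lemma t_lower (j : ℕ) (hj : 1 ≤ j) :
    2 * j * Real.log j - 12 * j ≤
      Real.log (|((bernoulli (2 * j) : ℚ) : ℝ)| / (4 * j)) := by
  obtain ⟨S, hS1, hS3, hEq⟩ := bern_abs_eq j hj
  have hf : (0:ℝ) < ((2*j).factorial : ℝ) := by exact_mod_cast Nat.factorial_pos _
  have hj' : (1:ℝ) ≤ (j:ℝ) := by exact_mod_cast hj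
  have hd : (0:ℝ) < 2 ^ (2 * j - 1) * π ^ (2 * j) := by positivity
  have key : ((2*j).factorial : ℝ) / ((2 ^ (2 * j - 1) * π ^ (2 * j)) * (4 * j)) ≤
      |((bernoulli (2 * j) : ℚ) : ℝ)| / (4 * j) := by
    rw [hEq, div_div]
    apply div_le_div_of_nonneg_right ?_ (by nlinarith) |>.trans (le_of_eq rfl)
    · nlinarith
  have hlog := Real.log_le_log (by positivity) key
  rw [Real.log_div (ne_of_gt hf) (by positivity), Real.log_mul (ne_of_gt hd) (by positivity),
    Real.log_mul (by positivity) (by positivity), Real.log_pow, Real.log_pow,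
    Real.log_mul (by norm_num) (by positivity : ((j:ℝ)) ≠ 0)] at hlog
  have h6 : Real.log (2*(j:ℝ)) = Real.log 2 + Real.log (j:ℝ) := by
    rw [Real.log_mul (by norm_num) (by positivity)]
  have h1 : 2*(j:ℝ) * Real.log 2 + 2*(j:ℝ) * Real.log (j:ℝ) - 2*(j:ℝ)
      ≤ Real.log ((2*j).factorial : ℝ) := by
    have := le_log_factorial (2*j)
    push_cast at this
    rw [h6] at this
    linarith [this]
  have hl2 : (0:ℝ) ≤ Real.log 2 := Real.log_nonneg (by norm_num)
  have h2 : ((2*j - 1 : ℕ) : ℝ) * Real.log 2 ≤ 2*(j:ℝ) * Real.log 2 := by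
    have hc : ((2*j - 1 : ℕ) : ℝ) ≤ 2*(j:ℝ) := by
      have : (2*j - 1 : ℕ) ≤ 2*j := by omega
      calc ((2*j - 1 : ℕ) : ℝ) ≤ ((2*j : ℕ) : ℝ) := by exact_mod_cast this
        _ = 2*(j:ℝ) := by push_cast; ring
    exact mul_le_mul_of_nonneg_right hc hl2
  have h3 : 2*(j:ℝ) * Real.log π ≤ 3*(j:ℝ) := by
    have := mul_le_mul_of_nonneg_left log_pi_le (by positivity : (0:ℝ) ≤ 2*(j:ℝ))
    linarith
  have h4 : Real.log 4 ≤ 3 := by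
    have h44 : (4:ℝ) = 2*2 := by norm_num
    rw [h44, Real.log_mul (by norm_num) (by norm_num)]; linarith [log_two_le]
  have h5 : Real.log (j:ℝ) ≤ (j:ℝ) - 1 := Real.log_le_sub_one_of_pos (by linarith)
  have h2jl : 2*(j:ℝ) * Real.log 2 ≥ 0 := by positivity
  push_cast at hlog
  linarith [hlog, h1, h2, h3, h4, h5]


lemma sum_Icc_id_real (m : ℕ) : ∑ j ∈ Icc 1 m, (j:ℝ) = m*(m+1)/2 := by
  induction m with
  | zero => simp
  | succ n ih =>
    rw [Finset.sum_Icc_succ_top (by omega), ih]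
    push_cast; ring

lemma sum_t_upper (m : ℕ) (hm : 1 ≤ m) :
    ∑ j ∈ Icc 1 m, Real.log (|((bernoulli (2 * j) : ℚ) : ℝ)| / (4 * j)) ≤
      (m:ℝ)^2 * Real.log m + 3 * m^2 := by
  have hm' : (1:ℝ) ≤ (m:ℝ) := by exact_mod_cast hm
  have hlm : (0:ℝ) ≤ Real.log m := Real.log_nonneg hm'
  have hl2m : Real.log (2*(m:ℝ)) = Real.log 2 + Real.log m :=
    Real.log_mul (by norm_num) (by linarith)
  have step : ∑ j ∈ Icc 1 m, Real.log (|((bernoulli (2 * j) : ℚ) : ℝ)| / (4 * j)) ≤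
      ∑ j ∈ Icc 1 m, (2 * Real.log (2*(m:ℝ))) * (j:ℝ) := by
    apply Finset.sum_le_sum
    intro j hj
    rw [Finset.mem_Icc] at hj
    have hj1 : (1:ℝ) ≤ (j:ℝ) := by exact_mod_cast hj.1
    have hjm : (j:ℝ) ≤ (m:ℝ) := by exact_mod_cast hj.2
    refine (t_upper j hj.1).trans ?_
    have : Real.log (2*(j:ℝ)) ≤ Real.log (2*(m:ℝ)) :=
      Real.log_le_log (by linarith) (by linarith)
    nlinarith
  rw [← Finset.mul_sum, sum_Icc_id_real] at step
  have hlog2 : Real.log 2 ≤ 1 := by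
    rw [Real.log_le_iff_le_exp (by norm_num)]
    linarith [Real.add_one_le_exp (1:ℝ)]
  have hlogm : Real.log m ≤ (m:ℝ) - 1 := Real.log_le_sub_one_of_pos (by linarith)
  have hl2 : (0:ℝ) ≤ Real.log 2 := Real.log_nonneg (by norm_num)
  nlinarith [step]

lemma sum_t_lower (m : ℕ) (hm : 1 ≤ m) :
    (m:ℝ)^2 * Real.log m - 14 * m^2 ≤
      ∑ j ∈ Icc 1 m, Real.log (|((bernoulli (2 * j) : ℚ) : ℝ)| / (4 * j)) := by
  have hm' : (1:ℝ) ≤ (m:ℝ) := by exact_mod_cast hm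
  have hlm : (0:ℝ) ≤ Real.log m := Real.log_nonneg hm'
  have step : ∑ j ∈ Icc 1 m, ((2 * Real.log m - 10) * (j:ℝ) - 2*(m:ℝ)) ≤
      ∑ j ∈ Icc 1 m, Real.log (|((bernoulli (2 * j) : ℚ) : ℝ)| / (4 * j)) := by
    apply Finset.sum_le_sum
    intro j hj
    rw [Finset.mem_Icc] at hj
    have hj1 : (1:ℝ) ≤ (j:ℝ) := by exact_mod_cast hj.1
    have hjm : (j:ℝ) ≤ (m:ℝ) := by exact_mod_cast hj.2
    refine le_trans ?_ (t_lower j hj.1)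
    -- j*log j ≥ j*log m - m + j
    have hlq : Real.log ((m:ℝ)/(j:ℝ)) ≤ (m:ℝ)/(j:ℝ) - 1 :=
      Real.log_le_sub_one_of_pos (by positivity)
    rw [Real.log_div (by linarith) (by linarith)] at hlq
    have hmul := mul_le_mul_of_nonneg_left hlq (by linarith : (0:ℝ) ≤ (j:ℝ))
    have hid : (j:ℝ) * ((m:ℝ)/(j:ℝ) - 1) = (m:ℝ) - (j:ℝ) := by
      field_simp
    rw [hid, mul_sub] at hmul
    nlinarith [hmul]
  have hsplit : ∑ j ∈ Icc 1 m, ((2 * Real.log m - 10) * (j:ℝ) - 2*(m:ℝ)) =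
      (2 * Real.log m - 10) * ((m:ℝ)*(m+1)/2) - 2*(m:ℝ)*(m:ℝ) := by
    rw [Finset.sum_sub_distrib, ← Finset.mul_sum, sum_Icc_id_real, Finset.sum_const,
      Nat.card_Icc]
    simp only [nsmul_eq_mul]
    push_cast [Nat.add_sub_cancel]
    ring
  rw [hsplit] at step
  nlinarith [step]


lemma hterm_pos (j : ℕ) : 0 < (2 * π) ^ (((j : ℝ) + 1) / 2) / Real.Gamma (((j : ℝ) + 1) / 2) := by
  apply div_pos
  · exact Real.rpow_pos_of_pos (by positivity) _
  · exact Real.Gamma_pos_of_pos (by positivity)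

lemma orthVol_pos (n : ℕ) : 0 < orthVol n := by
  unfold orthVol
  apply mul_pos (Real.rpow_pos_of_pos (by norm_num) _)
  exact Finset.prod_pos fun j _ => hterm_pos j

lemma orthVol_split (q : ℕ) :
    orthVol (q+3) = orthVol q * ((2:ℝ)^((3:ℝ)/2) *
      ∏ j ∈ Ioc q (q+3), (2 * π) ^ (((j : ℝ) + 1) / 2) / Real.Gamma (((j : ℝ) + 1) / 2)) := by
  unfold orthVol
  have hicc : ∀ n : ℕ, Finset.Icc 1 n = Finset.Ioc 0 n := fun n => Finset.Icc_add_one_left_eq_Ioc 0 n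
  rw [hicc, hicc, ← Finset.prod_Ioc_consecutive _ (Nat.zero_le q) (by omega : q ≤ q + 3)]
  have hc : (((q+3 : ℕ) : ℝ) + 1) / 2 = ((q:ℝ)+1)/2 + 3/2 := by push_cast; ring
  rw [hc, Real.rpow_add (by norm_num)]
  ring

lemma ceil_eq (q : ℕ) : Nat.ceil (((q : ℚ) + 1) / 2) = (q + 2) / 2 := by
  rw [Nat.ceil_eq_iff (by omega)]
  rcases Nat.even_or_odd q with ⟨k, rfl⟩ | ⟨k, rfl⟩
  · constructor
    · push_cast [(by omega : (k + k + 2) / 2 = k + 1)]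
      · linarith
    · push_cast [(by omega : (k + k + 2) / 2 = k + 1)]
      · linarith
  · constructor
    · push_cast [(by omega : (2*k + 1 + 2) / 2 = k + 1)]
      · linarith
    · push_cast [(by omega : (2*k + 1 + 2) / 2 = k + 1)]
      · linarith


lemma logG_bound : ∀ᶠ q : ℕ in atTop,
    |Real.log (orthVol (q+3) / (orthVol 3 * orthVol q))| ≤ 5 * (q:ℝ)^2 := by
  have hsq : Tendsto (fun q : ℕ => (q:ℝ)^2) atTop atTop :=
    (tendsto_pow_atTop (by norm_num)).comp tendsto_natCast_atTop_atTop
  filter_upwards [eventually_ge_atTop 4,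
    hsq.eventually_ge_atTop ((3/2) * Real.log 2 + |Real.log (orthVol 3)|)] with q hq4 hqc
  have hq4' : (4:ℝ) ≤ (q:ℝ) := by exact_mod_cast hq4
  -- rewrite G
  have hG : orthVol (q+3) / (orthVol 3 * orthVol q) =
      (2:ℝ)^((3:ℝ)/2) *
        (∏ j ∈ Ioc q (q+3), (2 * π) ^ (((j : ℝ) + 1) / 2) / Real.Gamma (((j : ℝ) + 1) / 2)) /
        orthVol 3 := by
    rw [orthVol_split q]
    have h1 := (orthVol_pos q).ne'
    have h3 := (orthVol_pos 3).ne'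
    field_simp
  set P := ∏ j ∈ Ioc q (q+3), (2 * π) ^ (((j : ℝ) + 1) / 2) / Real.Gamma (((j : ℝ) + 1) / 2)
    with hP
  have hPpos : 0 < P := Finset.prod_pos fun j _ => hterm_pos j
  have hlogG : Real.log (orthVol (q+3) / (orthVol 3 * orthVol q)) =
      (3/2) * Real.log 2 + Real.log P - Real.log (orthVol 3) := by
    rw [hG, Real.log_div (by positivity) (orthVol_pos 3).ne',
      Real.log_mul (by positivity) hPpos.ne', Real.log_rpow (by norm_num)]
  -- bound log P
  have hterm : ∀ j ∈ Ioc q (q+3),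
      |Real.log ((2 * π) ^ (((j : ℝ) + 1) / 2) / Real.Gamma (((j : ℝ) + 1) / 2))| ≤ (q:ℝ)^2 := by
    intro j hj
    rw [Finset.mem_Ioc] at hj
    set x : ℝ := ((j : ℝ) + 1) / 2 with hx
    have hjq : (q:ℝ) < (j:ℝ) := by exact_mod_cast hj.1
    have hjq3 : (j:ℝ) ≤ (q:ℝ)+3 := by exact_mod_cast hj.2
    have hx2 : (2:ℝ) ≤ x := by rw [hx]; linarith
    have hxq : x ≤ (q:ℝ)+1 := by rw [hx]; linarith
    have hΓ1 : (1:ℝ) ≤ Real.Gamma x := by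
      have := Real.Gamma_strictMonoOn_Ici.monotoneOn (Set.mem_Ici.mpr le_rfl)
        (Set.mem_Ici.mpr hx2) hx2
      rwa [Real.Gamma_two] at this
    have hΓq : Real.Gamma x ≤ (q.factorial : ℝ) := by
      have := Real.Gamma_strictMonoOn_Ici.monotoneOn (Set.mem_Ici.mpr hx2)
        (Set.mem_Ici.mpr (by linarith : (2:ℝ) ≤ (q:ℝ)+1)) hxq
      rwa [Real.Gamma_nat_eq_factorial] at this
    have hlogΓ : 0 ≤ Real.log (Real.Gamma x) ∧ Real.log (Real.Gamma x) ≤ (q:ℝ)^2 := by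
      constructor
      · exact Real.log_nonneg hΓ1
      · have h1 : Real.log (Real.Gamma x) ≤ Real.log (q.factorial : ℝ) :=
          Real.log_le_log (by linarith) hΓq
        have h2 := log_factorial_le q
        have h3 : Real.log (q:ℝ) ≤ (q:ℝ) - 1 := Real.log_le_sub_one_of_pos (by linarith)
        nlinarith
    have hl2π : 0 ≤ Real.log (2*π) ∧ Real.log (2*π) ≤ 5/2 := by
      rw [Real.log_mul (by norm_num) Real.pi_ne_zero]
      constructor
      · have : (1:ℝ) ≤ 2*π := by nlinarith [Real.pi_gt_three]
        have := Real.log_nonneg (by nlinarith [Real.pi_gt_three] : (1:ℝ) ≤ 2*π)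
        rw [Real.log_mul (by norm_num) Real.pi_ne_zero] at this
        exact this
      · linarith [log_two_le, log_pi_le]
    have hrw : Real.log ((2 * π) ^ x / Real.Gamma x) =
        x * Real.log (2*π) - Real.log (Real.Gamma x) := by
      rw [Real.log_div (ne_of_gt (Real.rpow_pos_of_pos (by positivity) _)) (by linarith),
        Real.log_rpow (by positivity)]
    rw [hrw, abs_le]
    have hx0 : 0 ≤ x := by linarith
    have hub : x * Real.log (2*π) ≤ (q:ℝ)^2 := by
      have h1 : x * Real.log (2*π) ≤ ((q:ℝ)+1) * (5/2) :=
        mul_le_mul hxq hl2π.2 hl2π.1 (by linarith)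
      nlinarith [hq4']
    constructor
    · nlinarith [mul_nonneg hx0 hl2π.1, hlogΓ.2]
    · nlinarith [hlogΓ.1, hub]
  have hlogP : |Real.log P| ≤ 3 * (q:ℝ)^2 := by
    rw [hP, Real.log_prod (fun j _ => (hterm_pos j).ne')]
    calc |∑ j ∈ Ioc q (q+3), Real.log ((2 * π) ^ (((j : ℝ) + 1) / 2) / Real.Gamma (((j : ℝ) + 1) / 2))|
        ≤ ∑ j ∈ Ioc q (q+3), |Real.log ((2 * π) ^ (((j : ℝ) + 1) / 2) / Real.Gamma (((j : ℝ) + 1) / 2))| :=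
          Finset.abs_sum_le_sum_abs _ _
      _ ≤ ∑ _j ∈ Ioc q (q+3), (q:ℝ)^2 := Finset.sum_le_sum hterm
      _ = 3 * (q:ℝ)^2 := by
          rw [Finset.sum_const, Nat.card_Ioc]
          simp [nsmul_eq_mul]
  rw [hlogG]
  have h0 : 0 ≤ (3/2) * Real.log 2 := by positivity
  calc |(3/2) * Real.log 2 + Real.log P - Real.log (orthVol 3)|
      ≤ |(3/2) * Real.log 2 + Real.log P| + |Real.log (orthVol 3)| := abs_sub _ _
    _ ≤ (3/2) * Real.log 2 + |Real.log P| + |Real.log (orthVol 3)| := by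
        have := abs_add_le ((3/2) * Real.log 2) (Real.log P)
        rw [abs_of_nonneg h0] at this
        linarith
    _ ≤ 5 * (q:ℝ)^2 := by
        have : (3/2) * Real.log 2 + |Real.log (orthVol 3)| ≤ (q:ℝ)^2 := hqc
        linarith [hlogP, sq_nonneg (q:ℝ)]


lemma mq_bounds (q : ℕ) : q + 1 ≤ 2 * ((q+2)/2) ∧ 2 * ((q+2)/2) ≤ q + 2 := by omega

lemma tendsto_A : Tendsto (fun q : ℕ => (((q+2)/2 : ℕ) : ℝ) / (q:ℝ)) atTop (𝓝 (1/2)) := by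
  refine tendsto_of_tendsto_of_tendsto_of_le_of_le' (g := fun _ : ℕ => (1:ℝ)/2)
    (h := fun q : ℕ => 1/2 + 1/(q:ℝ)) tendsto_const_nhds ?_ ?_ ?_
  · simpa using tendsto_const_nhds.add (tendsto_one_div_atTop_nhds_zero_nat (𝕜 := ℝ))
  · filter_upwards [eventually_ge_atTop 1] with q hq
    have hq' : (1:ℝ) ≤ (q:ℝ) := by exact_mod_cast hq
    have h := (mq_bounds q).1
    have h' : (q:ℝ) + 1 ≤ 2 * (((q+2)/2 : ℕ) : ℝ) := by exact_mod_cast h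
    rw [le_div_iff₀ (by linarith)]
    linarith
  · filter_upwards [eventually_ge_atTop 1] with q hq
    have hq' : (1:ℝ) ≤ (q:ℝ) := by exact_mod_cast hq
    have h := (mq_bounds q).2
    have h' : 2 * (((q+2)/2 : ℕ) : ℝ) ≤ (q:ℝ) + 2 := by exact_mod_cast h
    rw [div_le_iff₀ (by linarith)]
    have : (1/2 + 1/(q:ℝ)) * q = q/2 + 1 := by field_simp
    rw [this]
    linarith

lemma tendsto_logq : Tendsto (fun q : ℕ => Real.log (q:ℝ)) atTop atTop :=
  Real.tendsto_log_atTop.comp tendsto_natCast_atTop_atTop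

lemma tendsto_inv_logq : Tendsto (fun q : ℕ => (Real.log (q:ℝ))⁻¹) atTop (𝓝 0) :=
  tendsto_logq.inv_tendsto_atTop

lemma tendsto_B : Tendsto (fun q : ℕ => Real.log (((q+2)/2 : ℕ) : ℝ) / Real.log (q:ℝ))
    atTop (𝓝 1) := by
  refine tendsto_of_tendsto_of_tendsto_of_le_of_le'
    (g := fun q : ℕ => 1 - Real.log 2 * (Real.log (q:ℝ))⁻¹) (h := fun _ : ℕ => (1:ℝ)) ?_ ?_ ?_ ?_
  · simpa using tendsto_const_nhds.sub (tendsto_inv_logq.const_mul (Real.log 2))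
  · exact tendsto_const_nhds
  · filter_upwards [eventually_ge_atTop 2] with q hq
    have hq' : (2:ℝ) ≤ (q:ℝ) := by exact_mod_cast hq
    have hlq : 0 < Real.log (q:ℝ) := Real.log_pos (by linarith)
    have h' : (q:ℝ) + 1 ≤ 2 * (((q+2)/2 : ℕ) : ℝ) := by exact_mod_cast (mq_bounds q).1
    have hm1 : (q:ℝ)/2 ≤ (((q+2)/2 : ℕ) : ℝ) := by linarith
    have hlm : Real.log ((q:ℝ)/2) ≤ Real.log (((q+2)/2 : ℕ) : ℝ) :=
      Real.log_le_log (by linarith) hm1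
    rw [Real.log_div (by linarith) (by norm_num)] at hlm
    have hrw : 1 - Real.log 2 * (Real.log (q:ℝ))⁻¹ =
        (Real.log (q:ℝ) - Real.log 2) / Real.log (q:ℝ) := by
      field_simp
    rw [hrw]
    exact (div_le_div_iff_of_pos_right hlq).mpr hlm
  · filter_upwards [eventually_ge_atTop 2] with q hq
    have hq' : (2:ℝ) ≤ (q:ℝ) := by exact_mod_cast hq
    have hlq : 0 < Real.log (q:ℝ) := Real.log_pos (by linarith)
    have h' : 2 * (((q+2)/2 : ℕ) : ℝ) ≤ (q:ℝ) + 2 := by exact_mod_cast (mq_bounds q).2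
    have hm2 : (((q+2)/2 : ℕ) : ℝ) ≤ (q:ℝ) := by linarith
    have hm0 : (0:ℝ) < (((q+2)/2 : ℕ) : ℝ) := by
      have := (mq_bounds q).1
      have : (q:ℝ) + 1 ≤ 2 * (((q+2)/2 : ℕ) : ℝ) := by exact_mod_cast this
      linarith
    have : Real.log (((q+2)/2 : ℕ) : ℝ) ≤ Real.log (q:ℝ) := Real.log_le_log hm0 hm2
    rw [div_le_one hlq]
    exact this

lemma log_arithVol_close : ∀ᶠ q : ℕ in atTop,
    |Real.log (arithVol q) - (((q+2)/2 : ℕ) : ℝ)^2 * Real.log (((q+2)/2 : ℕ) : ℝ)| ≤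
      19 * (q:ℝ)^2 := by
  filter_upwards [logG_bound, eventually_ge_atTop 4] with q hGb hq4
  set m : ℕ := (q+2)/2 with hm
  have hm1 : 1 ≤ m := by omega
  have hmq : m ≤ q := by omega
  have hmq' : (m:ℝ) ≤ (q:ℝ) := by exact_mod_cast hmq
  have hm0 : (0:ℝ) ≤ (m:ℝ) := by positivity
  have hGpos : 0 < orthVol (q+3) / (orthVol 3 * orthVol q) :=
    div_pos (orthVol_pos _) (mul_pos (orthVol_pos 3) (orthVol_pos q))
  have hbpos : ∀ j ∈ Icc 1 m, 0 < |((bernoulli (2 * j) : ℚ) : ℝ)| / (4 * (j:ℝ)) := by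
    intro j hj
    rw [Finset.mem_Icc] at hj
    have h1 := bern_pos j hj.1
    have : (0:ℝ) < (j:ℝ) := by exact_mod_cast hj.1
    positivity
  have hPpos : 0 < ∏ j ∈ Icc 1 m, |((bernoulli (2 * j) : ℚ) : ℝ)| / (4 * (j:ℝ)) :=
    Finset.prod_pos hbpos
  have hsplit : Real.log (arithVol q) =
      Real.log (orthVol (q+3) / (orthVol 3 * orthVol q)) +
        ∑ j ∈ Icc 1 m, Real.log (|((bernoulli (2 * j) : ℚ) : ℝ)| / (4 * (j:ℝ))) := by
    unfold arithVol
    rw [ceil_eq q, ← hm, Real.log_mul hGpos.ne' hPpos.ne',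
      Real.log_prod (fun j hj => (hbpos j hj).ne')]
  rw [hsplit]
  have hsu := sum_t_upper m hm1
  have hsl := sum_t_lower m hm1
  have hmsq : (m:ℝ)^2 ≤ (q:ℝ)^2 := by nlinarith
  rw [abs_le] at hGb ⊢
  constructor <;> nlinarith [hGb.1, hGb.2, hsu, hsl]

lemma tendsto_F : Tendsto (fun q : ℕ =>
    (((q+2)/2 : ℕ) : ℝ)^2 * Real.log (((q+2)/2 : ℕ) : ℝ) / ((q:ℝ)^2 * Real.log (q:ℝ)))
    atTop (𝓝 (1/4)) := by
  have h := (tendsto_A.mul tendsto_A).mul tendsto_B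
  have hval : (1/2 : ℝ) * (1/2) * 1 = 1/4 := by norm_num
  rw [hval] at h
  apply h.congr'
  filter_upwards [eventually_ge_atTop 2] with q hq
  have hq' : (2:ℝ) ≤ (q:ℝ) := by exact_mod_cast hq
  have hq0 : (q:ℝ) ≠ 0 := by linarith
  have hlq : Real.log (q:ℝ) ≠ 0 := (Real.log_pos (by linarith)).ne'
  field_simp

/-- The arithmetic-quotient volume grows superexponentially, like `q^{q²/4}`:
`lim_{q→∞} (log W(q))/(q² log q) = 1/4`. -/
theorem arithmetic_quotient_volume_growth :
    Tendsto (fun q : ℕ =>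
        Real.log (arithVol q) / ((q : ℝ) ^ 2 * Real.log (q : ℝ)))
      atTop (nhds (1 / 4)) := by
  refine tendsto_of_tendsto_of_tendsto_of_le_of_le'
    (g := fun q : ℕ => (((q+2)/2 : ℕ) : ℝ)^2 * Real.log (((q+2)/2 : ℕ) : ℝ) /
        ((q:ℝ)^2 * Real.log (q:ℝ)) - 19 * (Real.log (q:ℝ))⁻¹)
    (h := fun q : ℕ => (((q+2)/2 : ℕ) : ℝ)^2 * Real.log (((q+2)/2 : ℕ) : ℝ) /
        ((q:ℝ)^2 * Real.log (q:ℝ)) + 19 * (Real.log (q:ℝ))⁻¹) ?_ ?_ ?_ ?_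
  · simpa using tendsto_F.sub (tendsto_inv_logq.const_mul 19)
  · simpa using tendsto_F.add (tendsto_inv_logq.const_mul 19)
  · filter_upwards [log_arithVol_close, eventually_ge_atTop 2] with q hcl hq2
    have hq' : (2:ℝ) ≤ (q:ℝ) := by exact_mod_cast hq2
    have hlq : 0 < Real.log (q:ℝ) := Real.log_pos (by linarith)
    have hden : 0 < (q:ℝ)^2 * Real.log (q:ℝ) := by positivity
    rw [abs_le] at hcl
    have he : ((((q+2)/2 : ℕ) : ℝ)^2 * Real.log (((q+2)/2 : ℕ) : ℝ) - 19 * (q:ℝ)^2) /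
        ((q:ℝ)^2 * Real.log (q:ℝ)) =
        (((q+2)/2 : ℕ) : ℝ)^2 * Real.log (((q+2)/2 : ℕ) : ℝ) / ((q:ℝ)^2 * Real.log (q:ℝ)) -
          19 * (Real.log (q:ℝ))⁻¹ := by
      field_simp
    rw [← he]
    exact (div_le_div_iff_of_pos_right hden).mpr (by linarith [hcl.1])
  · filter_upwards [log_arithVol_close, eventually_ge_atTop 2] with q hcl hq2
    have hq' : (2:ℝ) ≤ (q:ℝ) := by exact_mod_cast hq2
    have hlq : 0 < Real.log (q:ℝ) := Real.log_pos (by linarith)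
    have hden : 0 < (q:ℝ)^2 * Real.log (q:ℝ) := by positivity
    rw [abs_le] at hcl
    have he : ((((q+2)/2 : ℕ) : ℝ)^2 * Real.log (((q+2)/2 : ℕ) : ℝ) + 19 * (q:ℝ)^2) /
        ((q:ℝ)^2 * Real.log (q:ℝ)) =
        (((q+2)/2 : ℕ) : ℝ)^2 * Real.log (((q+2)/2 : ℕ) : ℝ) / ((q:ℝ)^2 * Real.log (q:ℝ)) +
          19 * (Real.log (q:ℝ))⁻¹ := by
      field_simp
    rw [← he]
    exact (div_le_div_iff_of_pos_right hden).mpr (by linarith [hcl.2])
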